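/- Let R be a commutative ring whose injective dimension as a module over itself is at most n (i.e., R is Gorenstein of Gorenstein dimension at most n). Let A be an R-algebra which is finitely generated and projective as an R-module, and suppose A carries an R-bilinear form β : A × A → R that is symmetric (β(x,y) = β(y,x) for all x,y ∈ A), associative (β(x·y, z) = β(x, y·z) for all x,y,z ∈ A), and non-degenerate in the sense that the R-linear map A → Hom_R(A,R), x ↦ (y ↦ β(y,x)), is bijective. Suppose moreover that the unit map R → A admits an R-linear retraction. Then the injective dimension of A as a left module over itself is at most n; in particular, A is a Gorenstein ring. -/

import Mathlib

/-!
STATEMENT 0: Let `R` be a commutative ring of self-injective dimension at most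
`n` and `A` an `R`-algebra, finitely generated projective as an `R`-module,
carrying a symmetric, associative, non-degenerate `R`-bilinear form and such
that the unit `R → A` admits an `R`-linear retraction.  Then `A` has injective
dimension at most `n` as a left module over itself (in particular `A` is
Gorenstein).

Injective dimension `≤ n` of a module `M` over a ring `S` is formalized by the
standard characterization: `Ext^i_S(N, M) = 0` for every `S`-module `N` and
every `i > n`.
-/

open CategoryTheory

universe u

instance moduleCatHasExt (S : Type u) [Ring S] : HasExt.{u + 1} (ModuleCat.{u} S) :=
  letI := HasDerivedCategory.standard (ModuleCat.{u} S)
  hasExt_of_hasDerivedCategory _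

/-- An `S`-module `M` has injective dimension at most `n` iff `Ext^i_S(N, M)`
vanishes for every `S`-module `N` and every `i > n`. -/
def injectiveDimensionLE (S : Type u) [Ring S] (M : Type u) [AddCommGroup M] [Module S M]
    (n : ℕ) : Prop :=
  ∀ (N : ModuleCat.{u} S) (i : ℕ), n < i →
    Subsingleton (Abelian.Ext N (ModuleCat.of S M) i)

namespace Gor

section MapCplx
variable {C D : Type*} [Category C] [Category D] [Preadditive C] [Preadditive D]
  {F : C ⥤ D} {G : D ⥤ C} [F.Additive] [G.Additive]
  {ι : Type*} (c : ComplexShape ι)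

noncomputable def mapHCAdj (adj : F ⊣ G) :
    F.mapHomologicalComplex c ⊣ G.mapHomologicalComplex c where
  unit :=
    { app := fun K =>
        { f := fun i => adj.unit.app (K.X i)
          comm' := fun i j _ => by exact (adj.unit.naturality (K.d i j)).symm }
      naturality := fun K L φ => by
        ext i
        exact adj.unit.naturality (φ.f i) }
  counit :=
    { app := fun K =>
        { f := fun i => adj.counit.app (K.X i)
          comm' := fun i j _ => by exact (adj.counit.naturality (K.d i j)).symm }
      naturality := fun K L φ => by
        ext i
        exact adj.counit.naturality (φ.f i) }
  left_triangle_components K := by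
    ext i
    exact adj.left_triangle_components (K.X i)
  right_triangle_components K := by
    ext i
    exact adj.right_triangle_components (K.X i)

end MapCplx

section SingleIso
variable (C : Type*) [Category C] [Abelian C] [HasDerivedCategory C]

noncomputable def sIso :
    DerivedCategory.singleFunctor C 0 ≅
      CochainComplex.singleFunctor C 0 ⋙ DerivedCategory.Q :=
  ⟨(DerivedCategory.singleFunctorsPostcompQIso C).hom.hom 0,
   (DerivedCategory.singleFunctorsPostcompQIso C).inv.hom 0,
   by exact (SingleFunctors.comp_hom _ _ 0).symm.trans ((congrArg (fun f => SingleFunctors.Hom.hom f 0) (Iso.hom_inv_id _)).trans (SingleFunctors.id_hom _ 0)),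
   by exact (SingleFunctors.comp_hom _ _ 0).symm.trans ((congrArg (fun f => SingleFunctors.Hom.hom f 0) (Iso.inv_hom_id _)).trans (SingleFunctors.id_hom _ 0))⟩

end SingleIso

section ChangeOfRings

variable {R A : Type u} [CommRing R] [Ring A] [Algebra R A]

/-- identity as an `R`-linear equivalence between `A` with its algebra module structure
and `A` with the `restrictScalars` module structure. -/
def resEquiv : A ≃ₗ[R] ((ModuleCat.restrictScalars.{u} (algebraMap R A)).obj
    (ModuleCat.of A A)) where
  toFun x := x
  invFun x := x
  map_add' _ _ := rfl
  map_smul' r x := by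
    show r • x = (algebraMap R A r) * x
    exact Algebra.smul_def r x
  left_inv _ := rfl
  right_inv _ := rfl

instance : Functor.Additive (ModuleCat.restrictScalars.{u} (algebraMap R A)) where
  map_add := rfl

instance : Functor.Additive (ModuleCat.coextendScalars.{u} (algebraMap R A)) where
  map_add := by
    intros
    apply ModuleCat.hom_ext; apply LinearMap.ext; intro h
    apply LinearMap.ext; intro s
    rfl


noncomputable def resHom : ((ModuleCat.restrictScalars.{u} (algebraMap R A)).obj
    (ModuleCat.of A A)) →ₗ[R] A :=
  (resEquiv (R := R) (A := A)).symm.toLinearMap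

noncomputable def resInv : A →ₗ[R] ((ModuleCat.restrictScalars.{u} (algebraMap R A)).obj
    (ModuleCat.of A A)) :=
  (resEquiv (R := R) (A := A)).toLinearMap

variable (β : A →ₗ[R] A →ₗ[R] R)

/-- The map `x ↦ β (-, x)` as a morphism in `ModuleCat A` from `A` to the
coextension of scalars of `R`. -/
noncomputable def pairHom (hassoc : ∀ x y z : A, β (x * y) z = β x (y * z)) :
    ModuleCat.of A A ⟶
      (ModuleCat.coextendScalars.{u} (algebraMap R A)).obj (ModuleCat.of R R) := ModuleCat.ofHom {
  toFun x :=
    { toFun := fun y => β (resHom y) x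
      map_add' := fun y z => by
        show β (resHom (y + z)) x = β (resHom y) x + β (resHom z) x
        rw [map_add, map_add, LinearMap.add_apply]
      map_smul' := fun c y => by
        show β (resHom (c • y)) x = c • β (resHom y) x
        rw [map_smul, map_smul]
        rfl }
  map_add' x y := LinearMap.ext fun z => by
    show β (resHom z) (x + y) = β (resHom z) x + β (resHom z) y
    rw [map_add]
  map_smul' a x := LinearMap.ext fun y => by
    show β (resHom y) (a * (show A from x)) = β ((resHom y) * a) x
    exact (hassoc (resHom y) a (show A from x)).symm }

lemma pairHom_bijective (hassoc : ∀ x y z : A, β (x * y) z = β x (y * z))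
    (hnondeg : Function.Bijective fun x : A => β.flip x) :
    Function.Bijective (pairHom β hassoc) := by
  constructor
  · intro x x' h
    have h' : (show ((ModuleCat.restrictScalars.{u} (algebraMap R A)).obj
          (ModuleCat.of A A)) →ₗ[R] R from pairHom β hassoc x) =
        (show ((ModuleCat.restrictScalars.{u} (algebraMap R A)).obj
          (ModuleCat.of A A)) →ₗ[R] R from pairHom β hassoc x') := h
    apply hnondeg.1
    apply LinearMap.ext
    intro y
    exact DFunLike.congr_fun h' (resInv y)
  · intro g
    obtain ⟨x, hx⟩ := hnondeg.2
      ((show ((ModuleCat.restrictScalars.{u} (algebraMap R A)).obj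
        (ModuleCat.of A A)) →ₗ[R] R from g).comp resInv)
    refine ⟨x, LinearMap.ext fun z => ?_⟩
    show β (resHom z) x = (show ((ModuleCat.restrictScalars.{u} (algebraMap R A)).obj
        (ModuleCat.of A A)) →ₗ[R] R from g) z
    exact DFunLike.congr_fun hx (resHom z)

instance resProjective [Module.Projective R A] :
    Module.Projective R ((ModuleCat.restrictScalars.{u} (algebraMap R A)).obj
      (ModuleCat.of A A)) :=
  Module.Projective.of_equiv (resEquiv (R := R) (A := A))

instance coextPreservesEpis [Module.Projective R A] :
    (ModuleCat.coextendScalars.{u} (algebraMap R A)).PreservesEpimorphisms where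
  preserves {M M'} g hg := by
    rw [ModuleCat.epi_iff_surjective] at hg ⊢
    intro h
    obtain ⟨h', hh'⟩ := Module.projective_lifting_property g.hom
      (show ((ModuleCat.restrictScalars.{u} (algebraMap R A)).obj
        (ModuleCat.of A A)) →ₗ[R] M' from h) hg
    exact ⟨h', hh'⟩

end ChangeOfRings
end Gor

open Category Limits Gor

theorem gorenstein_of_symmetric_form
    {R A : Type u} [CommRing R] [Ring A] [Algebra R A] (n : ℕ)
    (hR : injectiveDimensionLE R R n)
    [Module.Finite R A] [Module.Projective R A]
    (β : A →ₗ[R] A →ₗ[R] R)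
    (hsymm : ∀ x y : A, β x y = β y x)
    (hassoc : ∀ x y z : A, β (x * y) z = β x (y * z))
    (hnondeg : Function.Bijective fun x : A => β.flip x)
    (r : A →ₗ[R] R) (hr : ∀ c : R, r (algebraMap R A c) = c) :
    injectiveDimensionLE A A n := by
  intro N i hi
  letI := HasDerivedCategory.standard (ModuleCat.{u} A)
  letI := HasDerivedCategory.standard (ModuleCat.{u} R)
  let Res := ModuleCat.restrictScalars.{u} (algebraMap R A)
  let Coext := ModuleCat.coextendScalars.{u, u, u} (algebraMap R A)
  let adj : Res ⊣ Coext := ModuleCat.restrictCoextendScalarsAdj.{u, u, u} (algebraMap R A)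
  -- additivity and exactness instances
  haveI : Res.Additive :=
    inferInstanceAs (Functor.Additive (ModuleCat.restrictScalars.{u,u,u} (algebraMap R A)))
  haveI : Coext.Additive :=
    inferInstanceAs (Functor.Additive (ModuleCat.coextendScalars.{u,u,u} (algebraMap R A)))
  haveI : Coext.PreservesEpimorphisms :=
    inferInstanceAs
      (Functor.PreservesEpimorphisms (ModuleCat.coextendScalars.{u,u,u} (algebraMap R A)))
  haveI : PreservesFiniteLimits Res :=
    ⟨fun J _ _ => ⟨fun {K} => inferInstance⟩⟩
  haveI : PreservesFiniteColimits Res :=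
    ⟨fun J _ _ => ⟨fun {K} => inferInstance⟩⟩
  haveI : PreservesFiniteLimits Coext := by
    haveI := adj.rightAdjoint_preservesLimits
    exact PreservesLimitsOfSize.preservesFiniteLimits.{0, u, u} Coext
  haveI : PreservesFiniteColimits Coext := by
    have h0 : PreservesFiniteLimits Coext := inferInstance
    have h1 : ∀ (S : ShortComplex (ModuleCat.{u} R)), S.ShortExact →
        (S.map Coext).Exact ∧ Mono (Coext.map S.f) :=
      ((Functor.preservesFiniteLimits_tfae Coext).out 3 0 rfl rfl).1 h0
    refine ((Functor.preservesFiniteColimits_tfae Coext).out 0 3 rfl rfl).1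
      (fun S hS => ⟨(h1 S hS).1, ?_⟩)
    haveI := hS.epi_g
    exact Coext.map_epi S.g
  -- the derived adjunction
  letI adjC := mapHCAdj (F := Res) (G := Coext) (ComplexShape.up ℤ) adj
  haveI sq1 : CatCommSq (Res.mapHomologicalComplex (ComplexShape.up ℤ))
      DerivedCategory.Q DerivedCategory.Q Res.mapDerivedCategory :=
    ⟨Res.mapDerivedCategoryFactors.symm⟩
  haveI sq2 : CatCommSq (Coext.mapHomologicalComplex (ComplexShape.up ℤ))
      DerivedCategory.Q DerivedCategory.Q Coext.mapDerivedCategory :=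
    ⟨Coext.mapDerivedCategoryFactors.symm⟩
  let adjD : Res.mapDerivedCategory ⊣ Coext.mapDerivedCategory :=
    adjC.localization DerivedCategory.Q (HomologicalComplex.quasiIso _ _)
      DerivedCategory.Q (HomologicalComplex.quasiIso _ _)
      Res.mapDerivedCategory Coext.mapDerivedCategory
  -- the module-level isomorphism A ≅ Hom_R(A, R)
  let e₀ : ModuleCat.of A A ≅ Coext.obj (ModuleCat.of R R) :=
    (LinearEquiv.ofBijective (pairHom β hassoc).hom
      (pairHom_bijective β hassoc hnondeg)).toModuleIso ≪≫
        Iso.refl _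
  -- notation for single functors
  let sA := DerivedCategory.singleFunctor (ModuleCat.{u} A) 0
  let sR := DerivedCategory.singleFunctor (ModuleCat.{u} R) 0
  -- `single A ≅ Coext' (single R)` in the derived category of `A`
  let Φ : sA.obj (ModuleCat.of A A) ≅
      Coext.mapDerivedCategory.obj (sR.obj (ModuleCat.of R R)) :=
    sA.mapIso e₀ ≪≫ (sIso (ModuleCat.{u} A)).app (Coext.obj (ModuleCat.of R R)) ≪≫
      DerivedCategory.Q.mapIso
        (((HomologicalComplex.singleMapHomologicalComplex Coext (ComplexShape.up ℤ) 0).symm).app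
          (ModuleCat.of R R)) ≪≫
      (Coext.mapDerivedCategoryFactors.symm).app
        ((CochainComplex.singleFunctor (ModuleCat.{u} R) 0).obj (ModuleCat.of R R)) ≪≫
      Coext.mapDerivedCategory.mapIso ((sIso (ModuleCat.{u} R)).symm.app (ModuleCat.of R R))
  -- `Res' (single N) ≅ single (Res N)` in the derived category of `R`
  let Ψ : Res.mapDerivedCategory.obj (sA.obj N) ≅ sR.obj (Res.obj N) :=
    Res.mapDerivedCategory.mapIso ((sIso (ModuleCat.{u} A)).app N) ≪≫
      (Res.mapDerivedCategoryFactors).app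
        ((CochainComplex.singleFunctor (ModuleCat.{u} A) 0).obj N) ≪≫
      DerivedCategory.Q.mapIso
        ((HomologicalComplex.singleMapHomologicalComplex Res (ComplexShape.up ℤ) 0).app N) ≪≫
      (sIso (ModuleCat.{u} R)).symm.app (Res.obj N)
  -- the chain of equivalences
  let E : Abelian.Ext N (ModuleCat.of A A) i ≃ Abelian.Ext (Res.obj N) (ModuleCat.of R R) i :=
    Abelian.Ext.homEquiv.trans <|
      (((shiftFunctor (DerivedCategory (ModuleCat.{u} A)) (i : ℤ)).mapIso Φ).homToEquiv).trans <|
      (((Coext.mapDerivedCategory.commShiftIso (i : ℤ)).app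
          (sR.obj (ModuleCat.of R R))).symm.homToEquiv).trans <|
      ((adjD.homEquiv (sA.obj N) ((sR.obj (ModuleCat.of R R))⟦(i : ℤ)⟧)).symm).trans <|
      (Ψ.homFromEquiv).trans
      Abelian.Ext.homEquiv.symm
  haveI := hR (Res.obj N) i hi
  exact E.subsingleton
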